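/- Let k be a squarefree positive integer with k ≡ 1 (mod 6). Then k is prime if and only if the number of pairs of positive integers (x, y) satisfying x² + 3y² = k is odd. -/

import Mathlib

private lemma even_card_invol {α : Type*} [DecidableEq α] (f : α → α) :
    ∀ s : Finset α, (∀ x ∈ s, f x ∈ s) → (∀ x ∈ s, f (f x) = x) → (∀ x ∈ s, f x ≠ x) →
    Even s.card := by
  intro s
  induction s using Finset.strongInduction with
  | _ s ih =>
    intro hmem hinv hne
    rcases s.eq_empty_or_nonempty with rfl | ⟨x, hx⟩
    · simp
    · have hfx := hmem x hx
      have hxx : x ≠ f x := (hne x hx).symm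
      have hsub : {x, f x} ⊆ s := by
        intro y hy
        simp only [Finset.mem_insert, Finset.mem_singleton] at hy
        rcases hy with rfl | rfl
        · exact hx
        · exact hfx
      set t := s \ {x, f x} with ht
      have hts : t ⊂ s := by
        rw [ht]
        apply Finset.sdiff_ssubset hsub
        simp
      have hmemt : ∀ y ∈ t, y ∈ s ∧ y ≠ x ∧ y ≠ f x := by
        intro y hy
        rw [ht, Finset.mem_sdiff] at hy
        simp only [Finset.mem_insert, Finset.mem_singleton] at hy
        tauto
      have hft : ∀ y ∈ t, f y ∈ t := by
        intro y hy
        obtain ⟨hys, hyx, hyfx⟩ := hmemt y hy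
        rw [ht, Finset.mem_sdiff]
        simp only [Finset.mem_insert, Finset.mem_singleton]
        refine ⟨hmem y hys, ?_⟩
        rintro (h | h)
        · exact hyfx (by rw [← hinv y hys, h])
        · exact hyx (by rw [← hinv y hys, h, hinv x hx])
      have heven : Even t.card :=
        ih t hts hft (fun y hy => hinv y (hmemt y hy).1) (fun y hy => hne y (hmemt y hy).1)
      have hcard : s.card = t.card + 2 := by
        rw [ht, Finset.card_sdiff_of_subset hsub, Finset.card_pair hxx]
        have := Finset.card_le_card hsub
        rw [Finset.card_pair hxx] at this
        omega
      rw [hcard]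
      exact heven.add (by norm_num)

private lemma even_ncard_invol {α : Type*} {S : Set α} (hS : S.Finite) (f : α → α)
    (hmem : ∀ x ∈ S, f x ∈ S) (hinv : ∀ x ∈ S, f (f x) = x) (hne : ∀ x ∈ S, f x ≠ x) :
    Even S.ncard := by
  classical
  haveI := hS.fintype
  rw [Set.ncard_eq_toFinset_card']
  refine even_card_invol f S.toFinset ?_ ?_ ?_ <;> intro x hx <;>
    rw [Set.mem_toFinset] at *
  exacts [hmem x hx, hinv x hx, hne x hx]

private lemma exists_sqrt_neg_three (q : ℕ) (hq : q.Prime) (h3 : q % 3 = 1) :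
    ∃ t : ZMod q, t ^ 2 = -3 := by
  haveI : Fact q.Prime := ⟨hq⟩
  have h3' : (3 : ℕ) ∣ Fintype.card (ZMod q)ˣ := by
    rw [ZMod.card_units]
    omega
  obtain ⟨u, hu⟩ := exists_prime_orderOf_dvd_card 3 h3'
  set w : ZMod q := (u : ZMod q) with hwdef
  have hu3 : u ^ 3 = 1 := by rw [← hu]; exact pow_orderOf_eq_one u
  have hw3 : w ^ 3 = 1 := by
    rw [hwdef, ← Units.val_pow_eq_pow_val, hu3, Units.val_one]
  have hw1 : w ≠ 1 := by
    intro h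
    have : u = 1 := Units.val_eq_one.mp h
    rw [this, orderOf_one] at hu
    omega
  have hfac : (w - 1) * (w ^ 2 + w + 1) = 0 := by linear_combination hw3
  have hw : w ^ 2 + w + 1 = 0 := by
    rcases mul_eq_zero.mp hfac with h | h
    · exact absurd (sub_eq_zero.mp h) hw1
    · exact h
  exact ⟨2 * w + 1, by linear_combination 4 * hw⟩


set_option maxHeartbeats 2000000 in
private lemma exists_rep (q : ℕ) (hq : q.Prime) (h3 : q % 3 = 1) :
    ∃ a b : ℤ, 0 < a ∧ 0 < b ∧ a ^ 2 + 3 * b ^ 2 = (q : ℤ) := by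
  haveI : Fact q.Prime := ⟨hq⟩
  have hq2 : q ≠ 2 := by omega
  have hqodd : q % 2 = 1 := Nat.odd_iff.mp (hq.odd_of_ne_two hq2)
  have hq3 : ¬ (3 ∣ q) := by omega
  have hq0 : 0 < (q : ℤ) := by exact_mod_cast hq.pos
  have hrlt : q.sqrt ^ 2 < q := by
    rcases Nat.lt_or_ge (q.sqrt ^ 2) q with h | h
    · exact h
    · exfalso
      have h1 : q.sqrt * q.sqrt = q := le_antisymm (Nat.sqrt_le q) (by rw [pow_two] at h; exact h)
      have hdvd : q.sqrt ∣ q := ⟨q.sqrt, h1.symm⟩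
      rcases hq.eq_one_or_self_of_dvd _ hdvd with h2 | h2
      · rw [h2] at h1
        have := hq.two_le
        omega
      · rw [h2] at h1
        nlinarith [hq.two_le]
  obtain ⟨t, ht⟩ := exists_sqrt_neg_three q hq h3
  set r := q.sqrt with hr
  have hcard : Fintype.card (ZMod q) < Fintype.card (Fin (r + 1) × Fin (r + 1)) := by
    rw [ZMod.card, Fintype.card_prod, Fintype.card_fin]
    have := Nat.lt_succ_sqrt' q
    nlinarith
  obtain ⟨p₁, p₂, hne, heq⟩ := Fintype.exists_ne_map_eq_of_card_lt
    (fun p : Fin (r + 1) × Fin (r + 1) => ((p.1.val : ZMod q) - t * (p.2.val : ZMod q))) hcard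
  set X : ℤ := (p₁.1.val : ℤ) - (p₂.1.val : ℤ) with hXdef
  set Y : ℤ := (p₁.2.val : ℤ) - (p₂.2.val : ℤ) with hYdef
  have hb11 : p₁.1.val ≤ r := Fin.is_le _
  have hb21 : p₂.1.val ≤ r := Fin.is_le _
  have hb12 : p₁.2.val ≤ r := Fin.is_le _
  have hb22 : p₂.2.val ≤ r := Fin.is_le _
  have hXb : X ^ 2 ≤ (r : ℤ) ^ 2 := by
    have h1 : -(r : ℤ) ≤ X := by rw [hXdef]; omega
    have h2 : X ≤ (r : ℤ) := by rw [hXdef]; omega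
    exact sq_le_sq' h1 h2
  have hYb : Y ^ 2 ≤ (r : ℤ) ^ 2 := by
    have h1 : -(r : ℤ) ≤ Y := by rw [hYdef]; omega
    have h2 : Y ≤ (r : ℤ) := by rw [hYdef]; omega
    exact sq_le_sq' h1 h2
  have hrq : (r : ℤ) ^ 2 < (q : ℤ) := by exact_mod_cast hrlt
  have hX0 : X ≠ 0 ∨ Y ≠ 0 := by
    by_contra h
    push_neg at h
    apply hne
    have e1 : p₁.1 = p₂.1 := Fin.ext (by omega)
    have e2 : p₁.2 = p₂.2 := Fin.ext (by omega)
    exact Prod.ext e1 e2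
  have hXY : ((X : ZMod q)) = t * ((Y : ZMod q)) := by
    rw [hXdef, hYdef]
    push_cast
    linear_combination heq
  have hcong : ((X ^ 2 + 3 * Y ^ 2 : ℤ) : ZMod q) = 0 := by
    push_cast
    linear_combination ((X : ZMod q) + t * (Y : ZMod q)) * hXY + ((Y : ZMod q)) ^ 2 * ht
  obtain ⟨c, hc⟩ := (ZMod.intCast_zmod_eq_zero_iff_dvd _ q).mp hcong
  have hpos : 0 < X ^ 2 + 3 * Y ^ 2 := by
    rcases hX0 with h | h
    · nlinarith [sq_nonneg Y, (sq_nonneg X).lt_of_ne' (pow_ne_zero 2 h)]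
    · nlinarith [sq_nonneg X, (sq_nonneg Y).lt_of_ne' (pow_ne_zero 2 h)]
  have hcb : c = 1 ∨ c = 2 ∨ c = 3 := by
    have h1 : 0 < (q : ℤ) * c := hc ▸ hpos
    have h2 : (q : ℤ) * c ≤ 4 * (r : ℤ) ^ 2 := by rw [← hc]; nlinarith
    have hc0 : 0 < c := by
      by_contra hcon
      push_neg at hcon
      have := mul_le_mul_of_nonneg_left hcon hq0.le
      simp only [mul_zero] at this
      linarith
    have hc4 : c < 4 := by
      have hlt : (q : ℤ) * c < (q : ℤ) * 4 := by linarith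
      exact lt_of_mul_lt_mul_left hlt hq0.le
    omega
  rcases hcb with rfl | rfl | rfl
  · rw [mul_one] at hc
    have hY : Y ≠ 0 := by
      intro h
      rw [h] at hc
      simp at hc
      nlinarith
    have hX : X ≠ 0 := by
      intro h
      rw [h] at hc
      simp at hc
      have h31 : (3 : ℤ) ∣ (q : ℤ) := ⟨Y ^ 2, by linarith⟩
      have : (3 : ℕ) ∣ q := by exact_mod_cast h31
      exact hq3 this
    exact ⟨|X|, |Y|, abs_pos.mpr hX, abs_pos.mpr hY, by rw [sq_abs, sq_abs]; linarith⟩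
  · exfalso
    rcases Int.even_or_odd X with ⟨m, hm⟩ | ⟨m, hm⟩ <;>
      rcases Int.even_or_odd Y with ⟨n, hn⟩ | ⟨n, hn⟩
    · obtain ⟨A, hA⟩ : ∃ A : ℤ, A = m ^ 2 := ⟨_, rfl⟩
      obtain ⟨B, hB⟩ : ∃ B : ℤ, B = n ^ 2 := ⟨_, rfl⟩
      have e : 4 * A + 12 * B = (q : ℤ) * 2 := by rw [hA, hB, ← hc, hm, hn]; ring
      omega
    · obtain ⟨A, hA⟩ : ∃ A : ℤ, A = m ^ 2 := ⟨_, rfl⟩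
      obtain ⟨B, hB⟩ : ∃ B : ℤ, B = n ^ 2 := ⟨_, rfl⟩
      have e : 4 * A + 12 * B + 12 * n + 3 = (q : ℤ) * 2 := by rw [hA, hB, ← hc, hm, hn]; ring
      omega
    · obtain ⟨A, hA⟩ : ∃ A : ℤ, A = m ^ 2 := ⟨_, rfl⟩
      obtain ⟨B, hB⟩ : ∃ B : ℤ, B = n ^ 2 := ⟨_, rfl⟩
      have e : 4 * A + 4 * m + 1 + 12 * B = (q : ℤ) * 2 := by rw [hA, hB, ← hc, hm, hn]; ring
      omega
    · obtain ⟨A, hA⟩ : ∃ A : ℤ, A = m ^ 2 := ⟨_, rfl⟩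
      obtain ⟨B, hB⟩ : ∃ B : ℤ, B = n ^ 2 := ⟨_, rfl⟩
      have e : 4 * A + 4 * m + 12 * B + 12 * n + 4 = (q : ℤ) * 2 := by
        rw [hA, hB, ← hc, hm, hn]; ring
      omega
  · have h3X : (3 : ℤ) ∣ X ^ 2 := ⟨(q : ℤ) - Y ^ 2, by linarith⟩
    have hX3 : (3 : ℤ) ∣ X := Int.prime_three.dvd_of_dvd_pow h3X
    obtain ⟨Z, hZ⟩ := hX3
    have e : 3 * Z ^ 2 + Y ^ 2 = (q : ℤ) := by
      have h9 : 9 * Z ^ 2 + 3 * Y ^ 2 = (q : ℤ) * 3 := by rw [← hc, hZ]; ring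
      linarith
    have hY : Y ≠ 0 := by
      intro h
      rw [h] at e
      have h31 : (3 : ℤ) ∣ (q : ℤ) := ⟨Z ^ 2, by linarith⟩
      have : (3 : ℕ) ∣ q := by exact_mod_cast h31
      exact hq3 this
    have hZ0 : Z ≠ 0 := by
      intro h
      rw [h] at e
      nlinarith
    exact ⟨|Y|, |Z|, abs_pos.mpr hY, abs_pos.mpr hZ0, by rw [sq_abs, sq_abs]; linarith⟩


private lemma cop_of_rep {p : ℕ} (hp : p.Prime) {a b : ℤ} (hab : a ^ 2 + 3 * b ^ 2 = (p : ℤ)) :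
    IsCoprime a b := by
  rw [Int.isCoprime_iff_gcd_eq_one]
  by_contra hg
  set g := Int.gcd a b with hgdef
  have hga : ((g : ℕ) : ℤ) ∣ a := Int.gcd_dvd_left a b
  have hgb : ((g : ℕ) : ℤ) ∣ b := Int.gcd_dvd_right a b
  obtain ⟨u, hu⟩ := hga
  obtain ⟨v, hv⟩ := hgb
  have hdp : ((g : ℕ) : ℤ) ^ 2 ∣ (p : ℤ) :=
    ⟨u ^ 2 + 3 * v ^ 2, by rw [← hab, hu, hv]; ring⟩
  have hg2 : g ^ 2 ∣ p := by exact_mod_cast hdp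
  have hgp : g ∣ p := dvd_trans (dvd_pow_self _ two_ne_zero) hg2
  rcases hp.eq_one_or_self_of_dvd _ hgp with h | h
  · exact hg h
  · rw [h] at hg2
    have : p * p ∣ p := by rwa [pow_two] at hg2
    have hple := Nat.le_of_dvd hp.pos this
    nlinarith [hp.two_le]

private lemma rep_unique {p : ℕ} (hp : p.Prime) (h3 : p % 3 = 1)
    {a b c d : ℤ} (ha : 0 < a) (hb : 0 < b) (hc : 0 < c) (hd : 0 < d)
    (hab : a ^ 2 + 3 * b ^ 2 = (p : ℤ)) (hcd : c ^ 2 + 3 * d ^ 2 = (p : ℤ)) :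
    a = c ∧ b = d := by
  have hp0 : 0 < (p : ℤ) := by exact_mod_cast hp.pos
  have hpZ : Prime (p : ℤ) := Nat.prime_iff_prime_int.1 hp
  have key : (a * c + 3 * b * d) * (a * c - 3 * b * d) = (p : ℤ) * (c ^ 2 - 3 * b ^ 2) := by
    linear_combination c ^ 2 * hab - 3 * b ^ 2 * hcd
  have hdvd : (p : ℤ) ∣ (a * c + 3 * b * d) * (a * c - 3 * b * d) := ⟨_, key⟩
  rcases hpZ.dvd_mul.mp hdvd with h | h
  · have hid : (a * c + 3 * b * d) ^ 2 + 3 * (a * d - b * c) ^ 2 = (p : ℤ) ^ 2 := by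
      linear_combination (c ^ 2 + 3 * d ^ 2) * hab + (p : ℤ) * hcd
    have hpos2 : 0 < a * c + 3 * b * d := by positivity
    have hle : (p : ℤ) ≤ a * c + 3 * b * d := Int.le_of_dvd hpos2 h
    have heq : a * c + 3 * b * d = (p : ℤ) := by nlinarith [sq_nonneg (a * d - b * c)]
    have hz : (a * d - b * c) * (a * d - b * c) = 0 := by nlinarith
    have hadbc : a * d = b * c := by
      have := mul_self_eq_zero.mp hz
      linarith
    have hcop : IsCoprime a b := cop_of_rep hp hab
    have hcop2 : IsCoprime c d := cop_of_rep hp hcd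
    have hac : a ∣ c := hcop.dvd_of_dvd_mul_left ⟨d, by linarith⟩
    have hca : c ∣ a := hcop2.dvd_of_dvd_mul_left ⟨b, by linarith⟩
    have haec : a = c := Int.dvd_antisymm ha.le hc.le hac hca
    refine ⟨haec, ?_⟩
    have hbd3 : (3 : ℤ) * ((b - d) * (b + d)) = 0 := by
      rw [haec] at hab
      linear_combination hab - hcd
    have hbd : (b - d) * (b + d) = 0 := by
      rcases mul_eq_zero.mp hbd3 with h' | h'
      · norm_num at h'
      · exact h'
    rcases mul_eq_zero.mp hbd with h' | h'
    · linarith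
    · linarith
  · exfalso
    have hid2 : (a * c - 3 * b * d) ^ 2 + 3 * (a * d + b * c) ^ 2 = (p : ℤ) ^ 2 := by
      linear_combination (c ^ 2 + 3 * d ^ 2) * hab + (p : ℤ) * hcd
    have hpos3 : 0 < a * d + b * c := by positivity
    obtain ⟨e, he⟩ := h
    have he2 : (p : ℤ) ^ 2 * e ^ 2 < (p : ℤ) ^ 2 * 1 := by
      have h1 : (a * c - 3 * b * d) ^ 2 < (p : ℤ) ^ 2 := by
        nlinarith [mul_pos hpos3 hpos3]
      rw [mul_one]
      calc (p : ℤ) ^ 2 * e ^ 2 = (a * c - 3 * b * d) ^ 2 := by rw [he]; ring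
        _ < (p : ℤ) ^ 2 := h1
    have he3 : e ^ 2 < 1 := lt_of_mul_lt_mul_left he2 (by positivity)
    have he0 : e = 0 := by nlinarith [sq_nonneg e]
    rw [he0, mul_zero] at he
    rw [he] at hid2
    norm_num at hid2
    have h30 : (3 : ℤ) ∣ (p : ℤ) ^ 2 := ⟨(a * d + b * c) ^ 2, hid2.symm⟩
    have h3p : (3 : ℤ) ∣ (p : ℤ) := Int.prime_three.dvd_of_dvd_pow h30
    have : (3 : ℕ) ∣ p := by exact_mod_cast h3p
    omega

private lemma no_rep {k q : ℕ} (hsf : Squarefree k) (hk2 : k % 2 = 1) (hq : q.Prime)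
    (hq3 : q % 3 = 2) (hqk : q ∣ k) (x y : ℤ) (hxy : x ^ 2 + 3 * y ^ 2 = (k : ℤ)) : False := by
  haveI : Fact q.Prime := ⟨hq⟩
  haveI : Fact (Nat.Prime 3) := ⟨Nat.prime_three⟩
  have hq2 : q ≠ 2 := by
    intro h
    rw [h] at hqk
    omega
  have hq33 : q ≠ 3 := by omega
  have hqkZ : (q : ℤ) ∣ (k : ℤ) := by exact_mod_cast hqk
  have hqy : ¬ (q : ℤ) ∣ y := by
    intro hdy
    have h1 : (q : ℤ) ∣ x ^ 2 := by
      have : x ^ 2 = (k : ℤ) - 3 * (y * y) := by rw [← hxy]; ring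
      rw [this]
      exact dvd_sub hqkZ (Dvd.dvd.mul_left (hdy.mul_left y) 3)
    have hdx : (q : ℤ) ∣ x := (Nat.prime_iff_prime_int.1 hq).dvd_of_dvd_pow h1
    obtain ⟨u, hu⟩ := hdx
    obtain ⟨v, hv⟩ := hdy
    have hq2k : ((q : ℤ)) ^ 2 ∣ (k : ℤ) := ⟨u ^ 2 + 3 * v ^ 2, by rw [← hxy, hu, hv]; ring⟩
    have hq2k' : q ^ 2 ∣ k := by exact_mod_cast hq2k
    have := hsf q (by rwa [pow_two] at hq2k')
    rw [Nat.isUnit_iff] at this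
    exact hq.one_lt.ne' this
  have hy0 : ((y : ZMod q)) ≠ 0 := fun h => hqy ((ZMod.intCast_zmod_eq_zero_iff_dvd y q).mp h)
  have hk0 : ((k : ℕ) : ZMod q) = 0 := (ZMod.natCast_eq_zero_iff k q).mpr hqk
  have heq : ((x : ZMod q)) ^ 2 = -3 * ((y : ZMod q)) ^ 2 := by
    have hx2 : ((x ^ 2 + 3 * y ^ 2 : ℤ) : ZMod q) = ((k : ℤ) : ZMod q) := by rw [hxy]
    push_cast at hx2
    rw [hk0] at hx2
    linear_combination hx2
  set t := (x : ZMod q) * ((y : ZMod q))⁻¹ with htdef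
  have ht : t ^ 2 = -3 := by
    have hy2 : ((y : ZMod q)) ^ 2 ≠ 0 := pow_ne_zero _ hy0
    have hcalc : t ^ 2 * ((y : ZMod q)) ^ 2 = -3 * ((y : ZMod q)) ^ 2 := by
      have e1 : t ^ 2 * ((y : ZMod q)) ^ 2 = ((x : ZMod q)) ^ 2 * (((y : ZMod q))⁻¹ * (y : ZMod q)) ^ 2 := by
        rw [htdef]; ring
      rw [e1, inv_mul_cancel₀ hy0, one_pow, mul_one, heq]
    exact mul_right_cancel₀ hy2 hcalc
  have h20 : (2 : ZMod q) ≠ 0 := by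
    intro h
    have : ((2 : ℕ) : ZMod q) = 0 := by exact_mod_cast h
    have := (ZMod.natCast_eq_zero_iff 2 q).mp this
    have := Nat.le_of_dvd (by norm_num) this
    interval_cases q <;> simp_all
  set w := (t - 1) * (2 : ZMod q)⁻¹ with hwdef
  have h2w : 2 * w = t - 1 := by
    rw [hwdef]
    field_simp
  have h4 : (4 : ZMod q) * (w ^ 2 + w + 1) = 0 := by
    linear_combination (2 * w + t + 1) * h2w + ht
  have h40 : (4 : ZMod q) ≠ 0 := by
    intro h
    have : ((4 : ℕ) : ZMod q) = 0 := by exact_mod_cast h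
    have h4d := (ZMod.natCast_eq_zero_iff 4 q).mp this
    have : q ∣ 2 ^ 2 := by norm_num at h4d ⊢; exact h4d
    have := hq.dvd_of_dvd_pow this
    have := Nat.le_of_dvd (by norm_num) this
    omega
  have hw : w ^ 2 + w + 1 = 0 := by
    rcases mul_eq_zero.mp h4 with h | h
    · exact absurd h h40
    · exact h
  have hw3 : w ^ 3 = 1 := by linear_combination (w - 1) * hw
  have hw1 : w ≠ 1 := by
    intro h
    rw [h] at hw
    norm_num at hw
    have : ((3 : ℕ) : ZMod q) = 0 := by exact_mod_cast hw
    have := (ZMod.natCast_eq_zero_iff 3 q).mp this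
    have := Nat.le_of_dvd (by norm_num) this
    omega
  have hwu : IsUnit w := IsUnit.of_mul_eq_one (a := w) (w ^ 2) (by linear_combination hw3)
  obtain ⟨uw, huw⟩ := hwu
  have huw3 : uw ^ 3 = 1 := by
    apply Units.ext
    rw [Units.val_pow_eq_pow_val, huw, hw3, Units.val_one]
  have huw1 : uw ≠ 1 := fun h => hw1 (by rw [← huw, h, Units.val_one])
  have hord : orderOf uw = 3 := orderOf_eq_prime huw3 huw1
  have hdvd3 : (3 : ℕ) ∣ q - 1 := by
    rw [← ZMod.card_units q, ← hord]
    exact orderOf_dvd_card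
  have := hq.two_le
  omega


/-- One multiplication step: if `q ∣ ax+3by`, produce the coordinates of `z·π̄²/q`. -/
private lemma step {k q : ℕ} (hsf : Squarefree k) (hk3 : k % 3 = 1) (hk1 : 1 < k)
    (hq : q.Prime) (hq3 : q % 3 = 1) (hqk : q ∣ k)
    {a b x y : ℤ} (hab : a ^ 2 + 3 * b ^ 2 = (q : ℤ)) (hxy : x ^ 2 + 3 * y ^ 2 = (k : ℤ))
    (hqa : ¬ (q : ℤ) ∣ a)
    (hd : (q : ℤ) ∣ a * x + 3 * b * y) :
    ∃ u v : ℤ, x * (a ^ 2 - 3 * b ^ 2) + 6 * a * b * y = (q : ℤ) * u ∧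
      y * (a ^ 2 - 3 * b ^ 2) - 2 * a * b * x = (q : ℤ) * v ∧
      u ^ 2 + 3 * v ^ 2 = (k : ℤ) ∧ u ≠ 0 ∧ v ≠ 0 ∧
      a * u - 3 * b * v = a * x + 3 * b * y ∧
      u * (a ^ 2 - 3 * b ^ 2) - 6 * a * b * v = (q : ℤ) * x ∧
      v * (a ^ 2 - 3 * b ^ 2) + 2 * a * b * u = (q : ℤ) * y := by
  have hq0 : 0 < (q : ℤ) := by exact_mod_cast hq.pos
  have hq0' : (q : ℤ) ≠ 0 := hq0.ne'
  have hqZ : Prime (q : ℤ) := Nat.prime_iff_prime_int.1 hq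
  -- q ∣ b*x - a*y
  have hbxay : (q : ℤ) ∣ b * x - a * y := by
    have h1 : a * (b * x - a * y) = b * (a * x + 3 * b * y) - y * (a ^ 2 + 3 * b ^ 2) := by ring
    have h2 : (q : ℤ) ∣ a * (b * x - a * y) := by
      rw [h1, hab]
      exact dvd_sub (hd.mul_left b) ⟨y, by ring⟩
    rcases hqZ.dvd_mul.mp h2 with h | h
    · exact absurd h hqa
    · exact h
  have hXd : (q : ℤ) ∣ x * (a ^ 2 - 3 * b ^ 2) + 6 * a * b * y := by
    have hid : x * (a ^ 2 - 3 * b ^ 2) + 6 * a * b * y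
        = (q : ℤ) * x - 6 * b * (b * x - a * y) := by linear_combination x * hab
    rw [hid]
    exact dvd_sub ⟨x, rfl⟩ (hbxay.mul_left (6 * b))
  have hYd : (q : ℤ) ∣ y * (a ^ 2 - 3 * b ^ 2) - 2 * a * b * x := by
    have hid : y * (a ^ 2 - 3 * b ^ 2) - 2 * a * b * x
        = (q : ℤ) * y - 2 * b * (a * x + 3 * b * y) := by linear_combination y * hab
    rw [hid]
    exact dvd_sub ⟨y, rfl⟩ (hd.mul_left (2 * b))
  obtain ⟨u, hu⟩ := hXd
  obtain ⟨v, hv⟩ := hYd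
  have hnorm : u ^ 2 + 3 * v ^ 2 = (k : ℤ) := by
    have h2 : (q : ℤ) ^ 2 * (u ^ 2 + 3 * v ^ 2) = (q : ℤ) ^ 2 * (k : ℤ) := by
      have e : ((q : ℤ) * u) ^ 2 + 3 * ((q : ℤ) * v) ^ 2 = (q : ℤ) ^ 2 * (k : ℤ) := by
        rw [← hu, ← hv]
        linear_combination ((x ^ 2 + 3 * y ^ 2) * ((a ^ 2 + 3 * b ^ 2) + (q : ℤ))) * hab
          + (q : ℤ) ^ 2 * hxy
      linear_combination e
    exact mul_left_cancel₀ (pow_ne_zero 2 hq0') h2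
  have hu0 : u ≠ 0 := by
    intro h
    rw [h] at hnorm
    have h3k : (3 : ℤ) ∣ (k : ℤ) := ⟨v ^ 2, by linarith⟩
    have : (3 : ℕ) ∣ k := by exact_mod_cast h3k
    omega
  have hv0 : v ≠ 0 := by
    intro h
    rw [h] at hnorm
    have hk' : (↑(u.natAbs * u.natAbs) : ℤ) = (k : ℤ) := by
      rw [Int.natAbs_mul_self]
      linear_combination hnorm
    have hk'' : u.natAbs * u.natAbs = k := by exact_mod_cast hk'
    have := hsf u.natAbs ⟨1, by rw [← hk'']; ring⟩
    rw [Nat.isUnit_iff] at this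
    rw [this] at hk''
    omega
  refine ⟨u, v, hu, hv, hnorm, hu0, hv0, ?_, ?_, ?_⟩
  · have e : (q : ℤ) * (a * u - 3 * b * v) = (q : ℤ) * (a * x + 3 * b * y) := by
      have e1 : a * ((q : ℤ) * u) - 3 * b * ((q : ℤ) * v) = (q : ℤ) * (a * x + 3 * b * y) := by
        rw [← hu, ← hv]
        linear_combination (a * x + 3 * b * y) * hab
      linear_combination e1
    exact mul_left_cancel₀ hq0' e
  · have e : (q : ℤ) * (u * (a ^ 2 - 3 * b ^ 2) - 6 * a * b * v) = (q : ℤ) * ((q : ℤ) * x) := by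
      have e1 : ((q : ℤ) * u) * (a ^ 2 - 3 * b ^ 2) - 6 * a * b * ((q : ℤ) * v)
          = (q : ℤ) ^ 2 * x := by
        rw [← hu, ← hv]
        linear_combination (x * ((a ^ 2 + 3 * b ^ 2) + (q : ℤ))) * hab
      linear_combination e1
    exact mul_left_cancel₀ hq0' e
  · have e : (q : ℤ) * (v * (a ^ 2 - 3 * b ^ 2) + 2 * a * b * u) = (q : ℤ) * ((q : ℤ) * y) := by
      have e1 : ((q : ℤ) * v) * (a ^ 2 - 3 * b ^ 2) + 2 * a * b * ((q : ℤ) * u)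
          = (q : ℤ) ^ 2 * y := by
        rw [← hu, ← hv]
        linear_combination (y * ((a ^ 2 + 3 * b ^ 2) + (q : ℤ))) * hab
      linear_combination e1
    exact mul_left_cancel₀ hq0' e

set_option maxHeartbeats 2000000 in
private lemma even_case {k q : ℕ} (hsf : Squarefree k) (hk6 : k % 6 = 1) (hk1 : 1 < k)
    (hq : q.Prime) (hq3 : q % 3 = 1) (hqk : q ∣ k) (hnekq : k ≠ q)
    {a b : ℤ} (ha : 0 < a) (hb : 0 < b) (hab : a ^ 2 + 3 * b ^ 2 = (q : ℤ))
    {S : Set (ℤ × ℤ)}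
    (hS : S = {p : ℤ × ℤ | 0 < p.1 ∧ 0 < p.2 ∧ p.1 ^ 2 + 3 * p.2 ^ 2 = (k : ℤ)})
    (hfin : S.Finite) :
    Even S.ncard := by
  classical
  have hk3 : k % 3 = 1 := by omega
  have hk2 : k % 2 = 1 := by omega
  have hq0 : 0 < (q : ℤ) := by exact_mod_cast hq.pos
  have hq0' : (q : ℤ) ≠ 0 := hq0.ne'
  have hqZ : Prime (q : ℤ) := Nat.prime_iff_prime_int.1 hq
  have hq2 : q ≠ 2 := by omega
  have hq33 : q ≠ 3 := by omega
  have hqd2 : ¬ (q : ℤ) ∣ 2 := by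
    intro h
    have h' : q ∣ 2 := by exact_mod_cast h
    have h1 := Nat.le_of_dvd (by norm_num) h'
    have := hq.one_lt
    omega
  have hqd3 : ¬ (q : ℤ) ∣ 3 := by
    intro h
    have h' : q ∣ 3 := by exact_mod_cast h
    have h1 := Nat.le_of_dvd (by norm_num) h'
    have := hq.one_lt
    omega
  have hqa : ¬ (q : ℤ) ∣ a := by
    intro hda
    have hd3b : (q : ℤ) ∣ 3 * b ^ 2 := by
      have : 3 * b ^ 2 = (q : ℤ) - a ^ 2 := by linear_combination hab
      rw [this]
      exact dvd_sub ⟨1, (mul_one _).symm⟩ (hda.pow two_ne_zero)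
    have hdb : (q : ℤ) ∣ b := by
      rcases hqZ.dvd_mul.mp hd3b with h | h
      · exact absurd h hqd3
      · exact hqZ.dvd_of_dvd_pow h
    obtain ⟨a', ha'⟩ := hda
    obtain ⟨b', hb'⟩ := hdb
    have hqq : (q : ℤ) * 1 = (q : ℤ) * ((q : ℤ) * (a' ^ 2 + 3 * b' ^ 2)) := by
      linear_combination (-1 : ℤ) * hab + (a + (q : ℤ) * a') * ha' + 3 * (b + (q : ℤ) * b') * hb'
    have h1 : (1 : ℤ) = (q : ℤ) * (a' ^ 2 + 3 * b' ^ 2) := mul_left_cancel₀ hq0' hqq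
    have hd1 : (q : ℤ) ∣ 1 := ⟨_, h1⟩
    have hle1 := Int.le_of_dvd one_pos hd1
    have := hq.two_le
    omega
  -- not both divisibilities
  have hnotboth : ∀ x y : ℤ, x ^ 2 + 3 * y ^ 2 = (k : ℤ) →
      ¬ ((q : ℤ) ∣ a * x + 3 * b * y ∧ (q : ℤ) ∣ a * x - 3 * b * y) := by
    rintro x y hxy ⟨h1, h2⟩
    have hsum : (q : ℤ) ∣ 2 * (a * x) := by
      have : 2 * (a * x) = (a * x + 3 * b * y) + (a * x - 3 * b * y) := by ring
      rw [this]; exact dvd_add h1 h2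
    have hx : (q : ℤ) ∣ x := by
      rcases hqZ.dvd_mul.mp hsum with h | h
      · exact absurd h hqd2
      · rcases hqZ.dvd_mul.mp h with h' | h'
        · exact absurd h' hqa
        · exact h'
    have hdiff : (q : ℤ) ∣ 3 * (b * y) * 2 := by
      have : 3 * (b * y) * 2 = (a * x + 3 * b * y) - (a * x - 3 * b * y) := by ring
      rw [this]; exact dvd_sub h1 h2
    have hqb : ¬ (q : ℤ) ∣ b := by
      intro hdb
      have hda : (q : ℤ) ∣ a ^ 2 := by
        have : a ^ 2 = (q : ℤ) - 3 * b ^ 2 := by linear_combination hab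
        rw [this]
        exact dvd_sub ⟨1, (mul_one _).symm⟩ ((hdb.pow two_ne_zero).mul_left 3)
      exact hqa (hqZ.dvd_of_dvd_pow hda)
    have hy : (q : ℤ) ∣ y := by
      rcases hqZ.dvd_mul.mp hdiff with h | h
      · rcases hqZ.dvd_mul.mp h with h' | h'
        · exact absurd h' hqd3
        · rcases hqZ.dvd_mul.mp h' with h'' | h''
          · exact absurd h'' hqb
          · exact h''
      · exact absurd h hqd2
    obtain ⟨x', hx'⟩ := hx
    obtain ⟨y', hy'⟩ := hy
    have hq2k : ((q : ℤ)) ^ 2 ∣ (k : ℤ) := ⟨x' ^ 2 + 3 * y' ^ 2, by rw [← hxy, hx', hy']; ring⟩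
    have hq2k' : q ^ 2 ∣ k := by exact_mod_cast hq2k
    have := hsf q (by rwa [pow_two] at hq2k')
    rw [Nat.isUnit_iff] at this
    exact hq.one_lt.ne' this
  have hor : ∀ x y : ℤ, x ^ 2 + 3 * y ^ 2 = (k : ℤ) →
      ((q : ℤ) ∣ a * x + 3 * b * y) ∨ ((q : ℤ) ∣ a * x - 3 * b * y) := by
    intro x y hxy
    have key : (a * x + 3 * b * y) * (a * x - 3 * b * y)
        = a ^ 2 * (k : ℤ) - 3 * y ^ 2 * (q : ℤ) := by
      linear_combination a ^ 2 * hxy - 3 * y ^ 2 * hab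
    have hdvd : (q : ℤ) ∣ (a * x + 3 * b * y) * (a * x - 3 * b * y) := by
      rw [key]
      have hqkZ : (q : ℤ) ∣ (k : ℤ) := by exact_mod_cast hqk
      exact dvd_sub (hqkZ.mul_left _) ⟨3 * y ^ 2, by ring⟩
    exact hqZ.dvd_mul.mp hdvd
  -- auxiliary: |q*u|/q = |u|
  have habsdiv : ∀ A u : ℤ, A = (q : ℤ) * u → |A| / (q : ℤ) = |u| := by
    intro A u h
    rw [h, abs_mul, abs_of_pos hq0, Int.mul_ediv_cancel_left _ hq0']
  -- the involution
  set f : ℤ × ℤ → ℤ × ℤ := fun z =>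
    if (q : ℤ) ∣ a * z.1 + 3 * b * z.2 then
      (|z.1 * (a ^ 2 - 3 * b ^ 2) + 6 * a * b * z.2| / q,
       |z.2 * (a ^ 2 - 3 * b ^ 2) - 2 * a * b * z.1| / q)
    else
      (|z.1 * (a ^ 2 - 3 * b ^ 2) - 6 * a * b * z.2| / q,
       |z.2 * (a ^ 2 - 3 * b ^ 2) + 2 * a * b * z.1| / q) with hfdef
  have hab' : a ^ 2 + 3 * (-b) ^ 2 = (q : ℤ) := by linear_combination hab
  -- evaluation lemmas
  have feval_pos : ∀ x y u v : ℤ, ((q : ℤ) ∣ a * x + 3 * b * y) →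
      x * (a ^ 2 - 3 * b ^ 2) + 6 * a * b * y = (q : ℤ) * u →
      y * (a ^ 2 - 3 * b ^ 2) - 2 * a * b * x = (q : ℤ) * v →
      f (x, y) = (|u|, |v|) := by
    intro x y u v hd h1 h2
    rw [hfdef]
    simp only [if_pos hd]
    rw [habsdiv _ _ h1, habsdiv _ _ h2]
  have feval_neg : ∀ x y u v : ℤ, ¬ ((q : ℤ) ∣ a * x + 3 * b * y) →
      x * (a ^ 2 - 3 * b ^ 2) - 6 * a * b * y = (q : ℤ) * u →
      y * (a ^ 2 - 3 * b ^ 2) + 2 * a * b * x = (q : ℤ) * v →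
      f (x, y) = (|u|, |v|) := by
    intro x y u v hd h1 h2
    rw [hfdef]
    simp only [if_neg hd]
    rw [habsdiv _ _ h1, habsdiv _ _ h2]

  have key : ∀ z ∈ S, (f z ∈ S ∧ f (f z) = z ∧ f z ≠ z) := by
    rintro ⟨x, y⟩ hz
    rw [hS] at hz
    simp only [Set.mem_setOf_eq] at hz
    obtain ⟨hx, hy, hxy⟩ := hz
    have hcop : IsCoprime a b := cop_of_rep hq hab
    rcases hor x y hxy with hd | hd
    · -- branch 1 : q ∣ ax + 3by
      obtain ⟨u, v, hu, hv, hnorm, hu0, hv0, hlin, hbx, hby⟩ :=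
        step hsf hk3 hk1 hq hq3 hqk hab hxy hqa hd
      have hfz : f (x, y) = (|u|, |v|) := feval_pos x y u v hd hu hv
      have himg : f (x, y) ∈ S := by
        rw [hS, hfz]
        simp only [Set.mem_setOf_eq]
        refine ⟨abs_pos.mpr hu0, abs_pos.mpr hv0, ?_⟩
        rw [sq_abs, sq_abs]
        exact hnorm
      have hdu : (q : ℤ) ∣ a * u - 3 * b * v := hlin ▸ hd
      have hnd : ¬ (q : ℤ) ∣ a * u + 3 * b * v := fun hcon =>
        hnotboth u v hnorm ⟨hcon, hdu⟩
      have hff : f (|u|, |v|) = (x, y) := by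
        rcases abs_choice u with hau | hau <;> rcases abs_choice v with hav | hav <;>
          rw [hau, hav]
        · rw [feval_neg u v x y hnd hbx hby, abs_of_pos hx, abs_of_pos hy]
        · have hd' : (q : ℤ) ∣ a * u + 3 * b * (-v) := by
            have e : a * u + 3 * b * (-v) = a * u - 3 * b * v := by ring
            rw [e]; exact hdu
          have h1 : u * (a ^ 2 - 3 * b ^ 2) + 6 * a * b * (-v) = (q : ℤ) * x := by
            linear_combination hbx
          have h2 : (-v) * (a ^ 2 - 3 * b ^ 2) - 2 * a * b * u = (q : ℤ) * (-y) := by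
            linear_combination -hby
          rw [feval_pos u (-v) x (-y) hd' h1 h2, abs_of_pos hx, abs_neg, abs_of_pos hy]
        · have hd' : (q : ℤ) ∣ a * (-u) + 3 * b * v := by
            have e : a * (-u) + 3 * b * v = -(a * u - 3 * b * v) := by ring
            rw [e]; exact Dvd.dvd.neg_right hdu
          have h1 : (-u) * (a ^ 2 - 3 * b ^ 2) + 6 * a * b * v = (q : ℤ) * (-x) := by
            linear_combination -hbx
          have h2 : v * (a ^ 2 - 3 * b ^ 2) - 2 * a * b * (-u) = (q : ℤ) * y := by
            linear_combination hby
          rw [feval_pos (-u) v (-x) y hd' h1 h2, abs_neg, abs_of_pos hx, abs_of_pos hy]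
        · have hnd' : ¬ (q : ℤ) ∣ a * (-u) + 3 * b * (-v) := by
            intro hcon
            apply hnd
            have e : a * u + 3 * b * v = -(a * (-u) + 3 * b * (-v)) := by ring
            rw [e]; exact Dvd.dvd.neg_right hcon
          have h1 : (-u) * (a ^ 2 - 3 * b ^ 2) - 6 * a * b * (-v) = (q : ℤ) * (-x) := by
            linear_combination -hbx
          have h2 : (-v) * (a ^ 2 - 3 * b ^ 2) + 2 * a * b * (-u) = (q : ℤ) * (-y) := by
            linear_combination -hby
          rw [feval_neg (-u) (-v) (-x) (-y) hnd' h1 h2, abs_neg, abs_neg,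
            abs_of_pos hx, abs_of_pos hy]
      refine ⟨himg, by rw [hfz]; exact hff, ?_⟩
      rw [hfz]
      intro hcon
      have hux : |u| = x := congrArg Prod.fst hcon
      rcases abs_choice u with hau | hau
      · -- u = x : forces k = q
        have hux' : u = x := by rw [← hau, hux]
        rw [hux'] at hu
        have h6 : 6 * b * (a * y - b * x) = 0 := by linear_combination hu - x * hab
        have hayx : a * y - b * x = 0 := by
          rcases mul_eq_zero.mp h6 with h | h
          · exfalso; linarith
          · exact h
        have hax : a ∣ x := hcop.dvd_of_dvd_mul_left ⟨y, by linarith⟩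
        obtain ⟨t, ht⟩ := hax
        have hybt : y = b * t := by
          have h0 : a * (y - b * t) = 0 := by linear_combination hayx + b * ht
          rcases mul_eq_zero.mp h0 with h | h
          · exact absurd h ha.ne'
          · linarith
        have hkt : (k : ℤ) = t ^ 2 * (a ^ 2 + 3 * b ^ 2) := by
          rw [← hxy, ht, hybt]; ring
        rw [hab] at hkt
        have h1 : ((t.natAbs * t.natAbs : ℕ) : ℤ) = t * t := Int.natAbs_mul_self
        have h2 : (k : ℤ) = ((t.natAbs * t.natAbs : ℕ) : ℤ) * (q : ℤ) := by
          rw [h1]; linear_combination hkt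
        have h3 : k = t.natAbs * t.natAbs * q := by exact_mod_cast h2
        have h4 := hsf t.natAbs ⟨q, h3⟩
        rw [Nat.isUnit_iff] at h4
        rw [h4] at h3
        simp at h3
        exact hnekq h3
      · -- u = -x : impossible
        have hux' : u = -x := by
          have := hau.symm.trans hux
          linarith
        rw [hux'] at hu
        have h2a : 2 * a * (a * x + 3 * b * y) = 0 := by linear_combination hu + x * hab
        rcases mul_eq_zero.mp h2a with h | h
        · linarith
        · nlinarith [mul_pos ha hx, mul_pos hb hy]
    · -- branch 2 : q ∣ ax - 3by
      have hnd1 : ¬ (q : ℤ) ∣ a * x + 3 * b * y := fun hcon =>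
        hnotboth x y hxy ⟨hcon, hd⟩
      have hd' : (q : ℤ) ∣ a * x + 3 * (-b) * y := by
        have e : a * x + 3 * (-b) * y = a * x - 3 * b * y := by ring
        rw [e]; exact hd
      obtain ⟨u, v, hu, hv, hnorm, hu0, hv0, hlin, hbx, hby⟩ :=
        step hsf hk3 hk1 hq hq3 hqk hab' hxy hqa hd'
      have hu' : x * (a ^ 2 - 3 * b ^ 2) - 6 * a * b * y = (q : ℤ) * u := by
        linear_combination hu
      have hv' : y * (a ^ 2 - 3 * b ^ 2) + 2 * a * b * x = (q : ℤ) * v := by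
        linear_combination hv
      have hfz : f (x, y) = (|u|, |v|) := feval_neg x y u v hnd1 hu' hv'
      have himg : f (x, y) ∈ S := by
        rw [hS, hfz]
        simp only [Set.mem_setOf_eq]
        refine ⟨abs_pos.mpr hu0, abs_pos.mpr hv0, ?_⟩
        rw [sq_abs, sq_abs]
        exact hnorm
      have hlin' : a * u + 3 * b * v = a * x - 3 * b * y := by linear_combination hlin
      have hdu : (q : ℤ) ∣ a * u + 3 * b * v := hlin' ▸ hd
      have hnd : ¬ (q : ℤ) ∣ a * u - 3 * b * v := fun hcon =>
        hnotboth u v hnorm ⟨hdu, hcon⟩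
      have hbx' : u * (a ^ 2 - 3 * b ^ 2) + 6 * a * b * v = (q : ℤ) * x := by
        linear_combination hbx
      have hby' : v * (a ^ 2 - 3 * b ^ 2) - 2 * a * b * u = (q : ℤ) * y := by
        linear_combination hby
      have hff : f (|u|, |v|) = (x, y) := by
        rcases abs_choice u with hau | hau <;> rcases abs_choice v with hav | hav <;>
          rw [hau, hav]
        · rw [feval_pos u v x y hdu hbx' hby', abs_of_pos hx, abs_of_pos hy]
        · have hnd' : ¬ (q : ℤ) ∣ a * u + 3 * b * (-v) := by
            intro hcon
            apply hnd
            have e : a * u - 3 * b * v = a * u + 3 * b * (-v) := by ring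
            rw [e]; exact hcon
          have h1 : u * (a ^ 2 - 3 * b ^ 2) - 6 * a * b * (-v) = (q : ℤ) * x := by
            linear_combination hbx'
          have h2 : (-v) * (a ^ 2 - 3 * b ^ 2) + 2 * a * b * u = (q : ℤ) * (-y) := by
            linear_combination -hby'
          rw [feval_neg u (-v) x (-y) hnd' h1 h2, abs_of_pos hx, abs_neg, abs_of_pos hy]
        · have hnd' : ¬ (q : ℤ) ∣ a * (-u) + 3 * b * v := by
            intro hcon
            apply hnd
            have e : a * u - 3 * b * v = -(a * (-u) + 3 * b * v) := by ring
            rw [e]; exact Dvd.dvd.neg_right hcon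
          have h1 : (-u) * (a ^ 2 - 3 * b ^ 2) - 6 * a * b * v = (q : ℤ) * (-x) := by
            linear_combination -hbx'
          have h2 : v * (a ^ 2 - 3 * b ^ 2) + 2 * a * b * (-u) = (q : ℤ) * y := by
            linear_combination hby'
          rw [feval_neg (-u) v (-x) y hnd' h1 h2, abs_neg, abs_of_pos hx, abs_of_pos hy]
        · have hd2 : (q : ℤ) ∣ a * (-u) + 3 * b * (-v) := by
            have e : a * (-u) + 3 * b * (-v) = -(a * u + 3 * b * v) := by ring
            rw [e]; exact Dvd.dvd.neg_right hdu
          have h1 : (-u) * (a ^ 2 - 3 * b ^ 2) + 6 * a * b * (-v) = (q : ℤ) * (-x) := by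
            linear_combination -hbx'
          have h2 : (-v) * (a ^ 2 - 3 * b ^ 2) - 2 * a * b * (-u) = (q : ℤ) * (-y) := by
            linear_combination -hby'
          rw [feval_pos (-u) (-v) (-x) (-y) hd2 h1 h2, abs_neg, abs_neg,
            abs_of_pos hx, abs_of_pos hy]
      refine ⟨himg, by rw [hfz]; exact hff, ?_⟩
      rw [hfz]
      intro hcon
      have hux : |u| = x := congrArg Prod.fst hcon
      rcases abs_choice u with hau | hau
      · have hux' : u = x := by rw [← hau, hux]
        rw [hux'] at hu'
        have h6 : 6 * b * (b * x + a * y) = 0 := by linear_combination x * hab - hu'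
        rcases mul_eq_zero.mp h6 with h | h
        · linarith
        · nlinarith [mul_pos hb hx, mul_pos ha hy]
      · have hux' : u = -x := by
          have := hau.symm.trans hux
          linarith
        rw [hux'] at hu'
        have h2a : 2 * a * (a * x - 3 * b * y) = 0 := by linear_combination hu' + x * hab
        have hax3 : a * x = 3 * b * y := by
          rcases mul_eq_zero.mp h2a with h | h
          · exfalso; linarith
          · linarith
        have h3ax : (3 : ℤ) ∣ a * x := ⟨b * y, by linarith⟩
        rcases Int.prime_three.dvd_mul.mp h3ax with h3a | h3x
        · obtain ⟨a', ha'⟩ := h3a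
          have hq3' : (q : ℤ) = 3 * (3 * a' ^ 2 + b ^ 2) := by
            linear_combination (-1 : ℤ) * hab + (a + 3 * a') * ha'
          have : (3 : ℤ) ∣ (q : ℤ) := ⟨_, hq3'⟩
          have h3q : (3 : ℕ) ∣ q := by exact_mod_cast this
          omega
        · obtain ⟨x', hx'⟩ := h3x
          have hk3' : (k : ℤ) = 3 * (3 * x' ^ 2 + y ^ 2) := by
            linear_combination (-1 : ℤ) * hxy + (x + 3 * x') * hx'
          have : (3 : ℤ) ∣ (k : ℤ) := ⟨_, hk3'⟩
          have h3k : (3 : ℕ) ∣ k := by exact_mod_cast this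
          omega
  exact even_ncard_invol hfin f (fun z hz => (key z hz).1) (fun z hz => (key z hz).2.1)
    (fun z hz => (key z hz).2.2)



/-- Atkin's second condition: a squarefree positive `k ≡ 1 (mod 6)` is prime iff the
number of positive integer pairs `(x, y)` with `x² + 3y² = k` is odd. -/
theorem atkin_condition_two (k : ℕ) (hk : 0 < k) (hsf : Squarefree k) (hmod : k % 6 = 1) :
    Nat.Prime k ↔
      Odd {p : ℕ × ℕ | 0 < p.1 ∧ 0 < p.2 ∧ p.1 ^ 2 + 3 * p.2 ^ 2 = k}.ncard := by
  classical
  set S : Set (ℕ × ℕ) := {p : ℕ × ℕ | 0 < p.1 ∧ 0 < p.2 ∧ p.1 ^ 2 + 3 * p.2 ^ 2 = k}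
    with hSdef
  set T : Set (ℤ × ℤ) := {p : ℤ × ℤ | 0 < p.1 ∧ 0 < p.2 ∧ p.1 ^ 2 + 3 * p.2 ^ 2 = (k : ℤ)}
    with hTdef
  have hinj : Function.Injective (fun p : ℕ × ℕ => ((p.1 : ℤ), (p.2 : ℤ))) := by
    rintro ⟨x, y⟩ ⟨x', y'⟩ h
    simp only [Prod.mk.injEq, Nat.cast_inj] at h
    exact Prod.ext h.1 h.2
  have hST : T = (fun p : ℕ × ℕ => ((p.1 : ℤ), (p.2 : ℤ))) '' S := by
    ext ⟨x, y⟩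
    simp only [hTdef, hSdef, Set.mem_setOf_eq, Set.mem_image, Prod.mk.injEq, Prod.exists]
    constructor
    · rintro ⟨hx, hy, hxy⟩
      refine ⟨x.toNat, y.toNat, ⟨?_, ?_, ?_⟩, ?_, ?_⟩
      · omega
      · omega
      · have hx' : ((x.toNat : ℤ)) = x := Int.toNat_of_nonneg hx.le
        have hy' : ((y.toNat : ℤ)) = y := Int.toNat_of_nonneg hy.le
        have : ((x.toNat ^ 2 + 3 * y.toNat ^ 2 : ℕ) : ℤ) = (k : ℤ) := by
          push_cast
          rw [hx', hy']
          exact hxy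
        exact_mod_cast this
      · omega
      · omega
    · rintro ⟨x', y', ⟨hx', hy', hxy'⟩, rfl, rfl⟩
      refine ⟨by exact_mod_cast hx', by exact_mod_cast hy', ?_⟩
      exact_mod_cast congrArg (fun n : ℕ => (n : ℤ)) hxy'
  have hcardST : S.ncard = T.ncard := by
    rw [hST, Set.ncard_image_of_injective _ hinj]
  have hfinS : S.Finite := by
    apply Set.Finite.subset (Set.finite_Icc ((0 : ℕ), (0 : ℕ)) (k, k))
    rintro ⟨x, y⟩ hmem
    simp only [hSdef, Set.mem_setOf_eq] at hmem
    obtain ⟨hx, hy, hxy⟩ := hmem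
    simp only [Set.mem_Icc, Prod.mk_le_mk]
    have hx2 := Nat.le_self_pow (by norm_num : (2 : ℕ) ≠ 0) x
    have hy2 := Nat.le_self_pow (by norm_num : (2 : ℕ) ≠ 0) y
    exact ⟨⟨Nat.zero_le _, Nat.zero_le _⟩, by omega, by omega⟩
  have hfinT : T.Finite := by
    rw [hST]; exact hfinS.image _
  constructor
  · intro hkp
    have hk3 : k % 3 = 1 := by omega
    obtain ⟨a, b, ha, hb, hab⟩ := exists_rep k hkp hk3
    have hTsing : T = {(a, b)} := by
      ext ⟨x, y⟩
      simp only [hTdef, Set.mem_setOf_eq, Set.mem_singleton_iff, Prod.mk.injEq]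
      constructor
      · rintro ⟨hx, hy, hxy⟩
        exact rep_unique hkp hk3 hx hy ha hb hxy hab
      · rintro ⟨rfl, rfl⟩
        exact ⟨ha, hb, hab⟩
    rw [hcardST, hTsing, Set.ncard_singleton]
    exact odd_one
  · intro hodd
    by_contra hnp
    have heven : Even S.ncard := by
      rcases Nat.lt_or_ge k 2 with hk1 | hk1
      · have hk1' : k = 1 := by omega
        have hSe : S = ∅ := by
          ext ⟨x, y⟩
          simp only [hSdef, Set.mem_setOf_eq, Set.mem_empty_iff_false, iff_false]
          rintro ⟨hx, hy, hxy⟩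
          nlinarith
        rw [hSe, Set.ncard_empty]
        exact Even.zero
      · obtain ⟨q, hq, hqk⟩ := Nat.exists_prime_and_dvd (by omega : k ≠ 1)
        have hkq : k ≠ q := fun h => hnp (h ▸ hq)
        have h3k : ¬ (3 ∣ k) := by omega
        have hq3cases : q % 3 = 1 ∨ q % 3 = 2 := by
          rcases Nat.lt_or_ge (q % 3) 1 with h | h
          · exfalso
            have : 3 ∣ q := by omega
            exact h3k (dvd_trans this hqk)
          · omega
        rcases hq3cases with hq31 | hq32
        · obtain ⟨a, b, ha, hb, hab⟩ := exists_rep q hq hq31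
          rw [hcardST]
          exact even_case hsf hmod (by omega) hq hq31 hqk hkq ha hb hab hTdef hfinT
        · have hTe : T = ∅ := by
            ext ⟨x, y⟩
            simp only [hTdef, Set.mem_setOf_eq, Set.mem_empty_iff_false, iff_false]
            rintro ⟨hx, hy, hxy⟩
            exact no_rep hsf (by omega) hq hq32 hqk x y hxy
          rw [hcardST, hTe, Set.ncard_empty]
          exact Even.zero
    exact (Nat.not_odd_iff_even.mpr heven) hodd
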